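/- Equivalence of the two definitions of positive (p₁,…,p_m;r)-dominated multilinear operators: let 1 ≤ r, p, p₁,…,p_m ≤ ∞ with 1/p = 1/p₁ + ⋯ + 1/p_m + 1/r, E₁,…,E_m, F Banach lattices, and T ∈ L(E₁,…,E_m;F). Then T satisfies the domination inequality (Σ_i |⟨T(x_i¹,…,x_i^m), y_i*⟩|^p)^{1/p} ≤ C ∏_j ‖(x_i^j)‖_{p_j,w} ‖(y_i*)‖_{r,w} for all positive families x_i^j ∈ E_j⁺, y_i* ∈ F*⁺ with some constant C, if and only if T satisfies (Σ_i |⟨T(x_i¹,…,x_i^m), y_i*⟩|^p)^{1/p} ≤ C' ∏_j ‖(x_i^j)‖_{p_j,|w|} ‖(y_i*)‖_{r,|w|} for all (not necessarily positive) families x_i^j ∈ E_j, y_i* ∈ F* with some constant C'. Moreover, one can take C' ≤ 2^{m+1} C (and C ≤ C'). -/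

import Mathlib

/-- The weak `ℓ_p` norm of a finite family in a Banach space, over the dual unit ball. -/
noncomputable def wnorm {E : Type*} [NormedAddCommGroup E] [NormedSpace ℝ E]
    (p : ℝ) {n : ℕ} (x : Fin n → E) : ℝ :=
  sSup {s : ℝ | ∃ φ : E →L[ℝ] ℝ, ‖φ‖ ≤ 1 ∧ s = (∑ i, |φ (x i)| ^ p) ^ (1 / p)}

/-- The weak `ℓ_r` norm of a finite family of functionals on `F`, computed against
the bidual unit ball. -/
noncomputable def wnormDual {F : Type*} [NormedAddCommGroup F] [NormedSpace ℝ F]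
    (r : ℝ) {n : ℕ} (y : Fin n → (F →L[ℝ] ℝ)) : ℝ :=
  sSup {s : ℝ | ∃ ψ : (F →L[ℝ] ℝ) →L[ℝ] ℝ, ‖ψ‖ ≤ 1 ∧
    s = (∑ i, |ψ (y i)| ^ r) ^ (1 / r)}


section LatticeSmul
variable {X : Type*} [NormedAddCommGroup X] [Lattice X] [IsOrderedAddMonoid X] [HasSolidNorm X] [NormedSpace ℝ X]

lemma aux_nsmul_semiclosed (k : ℕ) (z : X) (h : 0 ≤ (2 ^ k) • z) : 0 ≤ z := by
  induction k generalizing z with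
  | zero => simpa using h
  | succ k ih =>
    have h2 : (2: ℕ) ^ (k+1) • z = 2 ^ k • (2 • z) := by
      rw [pow_succ, mul_smul]
    rw [h2] at h
    have := ih _ h
    exact nsmul_two_semiclosed this

lemma aux_smul_nonneg {c : ℝ} (hc : 0 ≤ c) {u : X} (hu : 0 ≤ u) : 0 ≤ c • u := by
  have key : ∀ j : ℕ, 0 ≤ ((⌊c * 2 ^ j⌋₊ : ℝ) / 2 ^ j) • u := by
    intro j
    set w : X := ((2:ℝ) ^ j)⁻¹ • u with hw
    have hwpos : 0 ≤ w := by
      apply aux_nsmul_semiclosed j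
      have : ((2:ℝ) ^ j) • w = u := by
        rw [hw, smul_smul, mul_inv_cancel₀ (by positivity), one_smul]
      rw [← Nat.cast_smul_eq_nsmul ℝ]
      push_cast
      rw [this]; exact hu
    have : ((⌊c * 2 ^ j⌋₊ : ℝ) / 2 ^ j) • u = (⌊c * 2 ^ j⌋₊ : ℕ) • w := by
      rw [← Nat.cast_smul_eq_nsmul ℝ, hw, smul_smul]
      ring_nf
    rw [this]
    exact nsmul_nonneg hwpos _
  have htend : Filter.Tendsto (fun j : ℕ => ((⌊c * 2 ^ j⌋₊ : ℝ) / 2 ^ j) • u)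
      Filter.atTop (nhds (c • u)) := by
    apply Filter.Tendsto.smul_const
    have h1 : Filter.Tendsto (fun j : ℕ => c - ((2:ℝ) ^ j)⁻¹) Filter.atTop (nhds c) := by
      simpa using tendsto_const_nhds.sub (tendsto_inv_atTop_zero.comp
        (tendsto_pow_atTop_atTop_of_one_lt (by norm_num : (1:ℝ) < 2)))
    apply tendsto_of_tendsto_of_tendsto_of_le_of_le h1 tendsto_const_nhds
    · intro j
      have h2 : c * 2 ^ j < ⌊c * 2 ^ j⌋₊ + 1 := Nat.lt_floor_add_one _
      have hp : (0:ℝ) < 2 ^ j := by positivity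
      rw [le_div_iff₀ hp, sub_mul, inv_mul_cancel₀ (ne_of_gt hp)]
      linarith
    · intro j
      have hp : (0:ℝ) < 2 ^ j := by positivity
      rw [div_le_iff₀ hp]
      exact Nat.floor_le (by positivity)
  exact isClosed_nonneg.mem_of_tendsto htend (Filter.Eventually.of_forall key)

lemma aux_smul_mono {c : ℝ} (hc : 0 ≤ c) {u v : X} (h : u ≤ v) : c • u ≤ c • v := by
  have := aux_smul_nonneg hc (sub_nonneg.mpr h)
  rwa [smul_sub, sub_nonneg] at this

lemma aux_abs_of_nonneg {u : X} (hu : 0 ≤ u) : |u| = u := by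
  rw [abs]
  exact sup_eq_left.mpr ((neg_nonpos.mpr hu).trans hu)

lemma aux_abs_smul (c : ℝ) {u : X} (hu : 0 ≤ u) : |c • u| = |c| • u := by
  rcases le_or_gt 0 c with hc | hc
  · rw [abs_of_nonneg hc, aux_abs_of_nonneg (aux_smul_nonneg hc hu)]
  · have : c • u = -((-c) • u) := by rw [neg_smul, neg_neg]
    rw [this, abs_neg, abs_of_neg hc,
      aux_abs_of_nonneg (aux_smul_nonneg (by linarith) hu)]

end LatticeSmul
lemma lp_mono {p : ℝ} (hp : 1 ≤ p) {n : ℕ} {f g : Fin n → ℝ} (h : ∀ i, |f i| ≤ |g i|) :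
    (∑ i, |f i| ^ p) ^ (1 / p) ≤ (∑ i, |g i| ^ p) ^ (1 / p) := by
  have hp0 : 0 ≤ p := le_trans zero_le_one hp
  apply Real.rpow_le_rpow
  · exact Finset.sum_nonneg fun i _ => Real.rpow_nonneg (abs_nonneg _) _
  · exact Finset.sum_le_sum fun i _ => Real.rpow_le_rpow (abs_nonneg _) (h i) hp0
  · positivity

lemma lp_triangle {p : ℝ} (hp : 1 ≤ p) {n : ℕ} (f g : Fin n → ℝ) :
    (∑ i, |f i + g i| ^ p) ^ (1 / p) ≤
      (∑ i, |f i| ^ p) ^ (1 / p) + (∑ i, |g i| ^ p) ^ (1 / p) :=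
  Real.Lp_add_le Finset.univ f g hp

lemma lp_sum_le {p : ℝ} (hp : 1 ≤ p) {n : ℕ} {κ : Type*} (K : Finset κ) (g : κ → Fin n → ℝ) :
    (∑ i, |∑ k ∈ K, g k i| ^ p) ^ (1 / p) ≤ ∑ k ∈ K, (∑ i, |g k i| ^ p) ^ (1 / p) := by
  classical
  induction K using Finset.cons_induction with
  | empty =>
    have hpne : p ≠ 0 := by positivity
    simp only [Finset.sum_empty, abs_zero, Real.zero_rpow hpne, Finset.sum_const_zero]
    rw [Real.zero_rpow (by positivity : 1 / p ≠ 0)]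
  | cons a K' hk ih =>
    calc (∑ i, |∑ k ∈ Finset.cons a K' hk, g k i| ^ p) ^ (1 / p)
        = (∑ i, |g a i + ∑ k ∈ K', g k i| ^ p) ^ (1 / p) := by
          simp only [Finset.sum_cons]
      _ ≤ (∑ i, |g a i| ^ p) ^ (1 / p) + (∑ i, |∑ k ∈ K', g k i| ^ p) ^ (1 / p) :=
          lp_triangle hp _ _
      _ ≤ (∑ i, |g a i| ^ p) ^ (1 / p) + ∑ k ∈ K', (∑ i, |g k i| ^ p) ^ (1 / p) := by
          linarith [ih]
      _ = ∑ k ∈ Finset.cons a K' hk, (∑ i, |g k i| ^ p) ^ (1 / p) := by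
          rw [Finset.sum_cons]
section Wnorm
variable {E : Type*} [NormedAddCommGroup E] [NormedSpace ℝ E] {q : ℝ} {n : ℕ}

lemma wnorm_zero_mem (hq : 1 ≤ q) (x : Fin n → E) :
    (0:ℝ) ∈ {s : ℝ | ∃ φ : E →L[ℝ] ℝ, ‖φ‖ ≤ 1 ∧ s = (∑ i, |φ (x i)| ^ q) ^ (1 / q)} := by
  refine ⟨0, by simp, ?_⟩
  have hqne : q ≠ 0 := by positivity
  rw [Finset.sum_congr rfl (fun i _ => by rw [ContinuousLinearMap.zero_apply, abs_zero, Real.zero_rpow hqne] : ∀ i ∈ Finset.univ, |((0:E →L[ℝ] ℝ)) (x i)| ^ q = (0:ℝ))]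
  rw [Finset.sum_const_zero, Real.zero_rpow (one_div_ne_zero hqne)]

lemma wnorm_bddAbove (hq : 1 ≤ q) (x : Fin n → E) :
    BddAbove {s : ℝ | ∃ φ : E →L[ℝ] ℝ, ‖φ‖ ≤ 1 ∧ s = (∑ i, |φ (x i)| ^ q) ^ (1 / q)} := by
  refine ⟨(∑ i, ‖x i‖ ^ q) ^ (1 / q), ?_⟩
  rintro s ⟨φ, hφ, rfl⟩
  apply Real.rpow_le_rpow
  · exact Finset.sum_nonneg fun i _ => Real.rpow_nonneg (abs_nonneg _) _
  · refine Finset.sum_le_sum fun i _ => Real.rpow_le_rpow (abs_nonneg _) ?_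
      (le_trans zero_le_one hq)
    calc |φ (x i)| = ‖φ (x i)‖ := (Real.norm_eq_abs _).symm
      _ ≤ ‖φ‖ * ‖x i‖ := φ.le_opNorm _
      _ ≤ 1 * ‖x i‖ := by gcongr
      _ = ‖x i‖ := one_mul _
  · positivity

lemma le_wnorm (hq : 1 ≤ q) (x : Fin n → E) (φ : E →L[ℝ] ℝ) (hφ : ‖φ‖ ≤ 1) :
    (∑ i, |φ (x i)| ^ q) ^ (1 / q) ≤ wnorm q x :=
  le_csSup (wnorm_bddAbove hq x) ⟨φ, hφ, rfl⟩

lemma wnorm_nonneg (hq : 1 ≤ q) (x : Fin n → E) : 0 ≤ wnorm q x :=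
  le_csSup (wnorm_bddAbove hq x) (wnorm_zero_mem hq x)

lemma wnorm_mono_of (hq : 1 ≤ q) (u v : Fin n → E)
    (h : ∀ c : Fin n → ℝ, ‖∑ i, c i • u i‖ ≤ ‖∑ i, |c i| • v i‖) :
    wnorm q u ≤ wnorm q v := by
  have hqne : q ≠ 0 := by positivity
  have hM0 : 0 ≤ wnorm q v := wnorm_nonneg hq v
  apply Real.sSup_le _ hM0
  rintro s ⟨φ, hφ, rfl⟩
  classical
  set S : Set (Fin n → ℝ) := {s | ∃ (σ : Fin n → ℝ) (χ : E →L[ℝ] ℝ),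
    (∀ i, σ i = 1 ∨ σ i = -1) ∧ ‖χ‖ ≤ 1 ∧ s = fun i => σ i * χ (v i)} with hS
  set D : Set (Fin n → ℝ) := {s | (∑ i, |s i| ^ q) ^ (1 / q) ≤ wnorm q v} with hD
  have hSD : S ⊆ D := by
    rintro _ ⟨σ, χ, hσ, hχ, rfl⟩
    have habs : ∀ i, |σ i * χ (v i)| = |χ (v i)| := by
      intro i
      rcases hσ i with h1 | h1 <;> simp [h1, abs_mul]
    simpa only [hD, Set.mem_setOf_eq, habs] using le_wnorm hq v χ hχ
  have Gsmul : ∀ (c : ℝ) (s : Fin n → ℝ), 0 ≤ c →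
      (∑ i, |c * s i| ^ q) ^ (1 / q) = c * (∑ i, |s i| ^ q) ^ (1 / q) := by
    intro c s hc
    have h1 : ∀ i ∈ Finset.univ, |c * s i| ^ q = c ^ q * |s i| ^ q := by
      intro i _
      rw [abs_mul, abs_of_nonneg hc, Real.mul_rpow hc (abs_nonneg _)]
    rw [Finset.sum_congr rfl h1, ← Finset.mul_sum,
      Real.mul_rpow (Real.rpow_nonneg hc _)
        (Finset.sum_nonneg fun i _ => Real.rpow_nonneg (abs_nonneg _) _),
      one_div, Real.rpow_rpow_inv hc hqne]
  have hDconv : Convex ℝ D := by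
    intro s₁ h₁ s₂ h₂ a b ha hb hab
    simp only [hD, Set.mem_setOf_eq] at h₁ h₂ ⊢
    calc (∑ i, |(a • s₁ + b • s₂) i| ^ q) ^ (1 / q)
        = (∑ i, |a * s₁ i + b * s₂ i| ^ q) ^ (1 / q) := by
          simp only [Pi.add_apply, Pi.smul_apply, smul_eq_mul]
      _ ≤ (∑ i, |a * s₁ i| ^ q) ^ (1 / q) + (∑ i, |b * s₂ i| ^ q) ^ (1 / q) :=
          lp_triangle hq _ _
      _ = a * (∑ i, |s₁ i| ^ q) ^ (1 / q) + b * (∑ i, |s₂ i| ^ q) ^ (1 / q) := by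
          rw [Gsmul a s₁ ha, Gsmul b s₂ hb]
      _ ≤ a * wnorm q v + b * wnorm q v :=
          add_le_add (mul_le_mul_of_nonneg_left h₁ ha) (mul_le_mul_of_nonneg_left h₂ hb)
      _ = wnorm q v := by rw [← add_mul, hab, one_mul]
  have hDclosed : IsClosed D := by
    have hcont : Continuous fun s : Fin n → ℝ => (∑ i, |s i| ^ q) ^ (1 / q) := by
      apply Continuous.rpow_const
      · exact continuous_finset_sum _ fun i _ =>
          (continuous_apply i).abs.rpow_const fun x => Or.inr (by positivity)
      · intro x; right; positivity
    exact isClosed_le hcont continuous_const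
  have ht : (fun i => φ (u i)) ∈ closure (convexHull ℝ S) := by
    by_contra hcon
    obtain ⟨f, b, hfb, hbt⟩ := geometric_hahn_banach_closed_point
      (convex_convexHull ℝ S).closure isClosed_closure hcon
    set c : Fin n → ℝ := fun i => f (Pi.single i 1) with hc'
    have hfs : ∀ s : Fin n → ℝ, f s = ∑ i, s i * c i := by
      intro s
      have hrep : s = ∑ i, s i • (Pi.single i (1:ℝ) : Fin n → ℝ) := by
        funext j
        simp [Finset.sum_apply, Pi.single_apply]
      conv_lhs => rw [hrep]
      rw [map_sum]
      refine Finset.sum_congr rfl fun i _ => ?_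
      rw [map_smul, smul_eq_mul, hc', mul_comm]
  -- leftover marker
    have h0S : (0 : Fin n → ℝ) ∈ S := by
      refine ⟨fun _ => 1, 0, fun i => Or.inl rfl, by simp, ?_⟩
      funext i; simp
    have hb0 : 0 < b := by
      have := hfb 0 (subset_closure (subset_convexHull ℝ S h0S))
      simpa using this
    have hft : f (fun i => φ (u i)) ≤ ‖∑ i, |c i| • v i‖ := by
      have heq : f (fun i => φ (u i)) = φ (∑ i, c i • u i) := by
        rw [hfs, map_sum]
        refine Finset.sum_congr rfl fun i _ => ?_
        rw [map_smul, smul_eq_mul, mul_comm]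
      rw [heq]
      calc φ (∑ i, c i • u i) ≤ |φ (∑ i, c i • u i)| := le_abs_self _
        _ ≤ ‖φ‖ * ‖∑ i, c i • u i‖ := by
            rw [← Real.norm_eq_abs]; exact φ.le_opNorm _
        _ ≤ 1 * ‖∑ i, c i • u i‖ := by gcongr
        _ = ‖∑ i, c i • u i‖ := one_mul _
        _ ≤ ‖∑ i, |c i| • v i‖ := h c
    set w : E := ∑ i, |c i| • v i with hw
    have hbft : b < f (fun i => φ (u i)) := hbt
    have hwne : w ≠ 0 := by
      intro hw0
      rw [hw0, norm_zero] at hft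
      linarith
    obtain ⟨g, hg1, hgw⟩ := exists_dual_vector ℝ w (norm_ne_zero_iff.mpr hwne)
    set σ : Fin n → ℝ := fun i => if c i < 0 then -1 else 1 with hσ'
    have hσ : ∀ i, σ i = 1 ∨ σ i = -1 := by
      intro i; by_cases h1 : c i < 0 <;> simp [hσ', h1]
    have hs0 : (fun i => σ i * g (v i)) ∈ S := ⟨σ, g, hσ, le_of_eq hg1, rfl⟩
    have hfgw : f (fun i => σ i * g (v i)) = g w := by
      rw [hfs]
      have hgww : g w = ∑ i, |c i| * g (v i) := by
        rw [hw, map_sum]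
        exact Finset.sum_congr rfl fun i _ => by rw [map_smul, smul_eq_mul]
      rw [hgww]
      refine Finset.sum_congr rfl fun i _ => ?_
      have hsc : σ i * c i = |c i| := by
        by_cases h1 : c i < 0
        · show (if c i < 0 then (-1:ℝ) else 1) * c i = |c i|
          rw [if_pos h1, abs_of_neg h1]; ring
        · show (if c i < 0 then (-1:ℝ) else 1) * c i = |c i|
          rw [if_neg h1, abs_of_nonneg (le_of_not_gt h1)]; ring
      calc (σ i * g (v i)) * c i = (σ i * c i) * g (v i) := by ring
        _ = |c i| * g (v i) := by rw [hsc]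
    have hgw' : g w = ‖w‖ := by exact_mod_cast hgw
    have hlt := hfb _ (subset_closure (subset_convexHull ℝ S hs0))
    rw [hfgw, hgw'] at hlt
    linarith
  have hmem : (fun i => φ (u i)) ∈ D :=
    closure_minimal (convexHull_min hSD hDconv) hDclosed ht
  simpa only [hD, Set.mem_setOf_eq] using hmem

end Wnorm
section AuxAbs
variable {X : Type*} [NormedAddCommGroup X] [Lattice X] [IsOrderedAddMonoid X] [HasSolidNorm X]

lemma aux_abs_sum_le {n : ℕ} (f : Fin n → X) (K : Finset (Fin n)) :
    |∑ i ∈ K, f i| ≤ ∑ i ∈ K, |f i| := by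
  classical
  induction K using Finset.cons_induction with
  | empty => simp
  | cons a K' hk ih =>
    rw [Finset.sum_cons, Finset.sum_cons]
    exact le_trans (abs_add_le _ _) (add_le_add_right ih _)

lemma aux_abs_nonneg' (z : X) : 0 ≤ |z| := by
  rw [← posPart_add_negPart z]
  exact add_nonneg (posPart_nonneg z) (negPart_nonneg z)

end AuxAbs

lemma wnormDual_eq_wnorm {F : Type*} [NormedAddCommGroup F] [NormedSpace ℝ F]
    (r : ℝ) {n : ℕ} (y : Fin n → (F →L[ℝ] ℝ)) : wnormDual r y = wnorm r y := rfl

/-- Equivalence of the two definitions of positive `(p₁,…,p_m;r)`-dominated multilinear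
operators: the domination inequality for positive families (weak norms) holds with some
constant `C` iff the inequality for arbitrary families with `|w|`-norms holds with some
constant `C'`; quantitatively one can take `C' = 2^{m+1} C`, and conversely `C ≤ C'`.
Here `aD φ = |φ|` is the lattice absolute value in the dual `F*`, characterized as the
least upper bound of `φ` and `-φ` for the dual order. -/
theorem pos_dominated_equiv_absolute_formulation
    {m : ℕ} {E : Fin m → Type*}
    [∀ j, NormedAddCommGroup (E j)] [∀ j, Lattice (E j)] [∀ j, IsOrderedAddMonoid (E j)]
    [∀ j, HasSolidNorm (E j)] [∀ j, NormedSpace ℝ (E j)]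
    {F : Type*} [NormedAddCommGroup F] [Lattice F] [IsOrderedAddMonoid F] [HasSolidNorm F]
    [NormedSpace ℝ F]
    (p r : ℝ) (pj : Fin m → ℝ) (hr : 1 ≤ r) (hpj : ∀ j, 1 ≤ pj j) (hp : 1 ≤ p)
    (hhol : 1 / p = (∑ j, 1 / pj j) + 1 / r)
    (aD : (F →L[ℝ] ℝ) → (F →L[ℝ] ℝ))
    (haD : ∀ φ : F →L[ℝ] ℝ,
      (∀ y : F, 0 ≤ y → φ y ≤ aD φ y ∧ -φ y ≤ aD φ y) ∧
      ∀ χ : F →L[ℝ] ℝ, (∀ y : F, 0 ≤ y → φ y ≤ χ y ∧ -φ y ≤ χ y) →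
        ∀ y : F, 0 ≤ y → aD φ y ≤ χ y)
    (T : ContinuousMultilinearMap ℝ E F) :
    (∀ C : ℝ, 0 < C →
      (∀ (n : ℕ) (x : Fin n → ∀ j, E j) (y : Fin n → (F →L[ℝ] ℝ)),
        (∀ i j, 0 ≤ x i j) → (∀ i, ∀ z, 0 ≤ z → 0 ≤ y i z) →
        (∑ i, |y i (T (x i))| ^ p) ^ (1 / p) ≤
          C * (∏ j, wnorm (pj j) (fun i => x i j)) * wnormDual r y) →
      (∀ (n : ℕ) (x : Fin n → ∀ j, E j) (y : Fin n → (F →L[ℝ] ℝ)),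
        (∑ i, |y i (T (x i))| ^ p) ^ (1 / p) ≤
          (2 ^ (m + 1) * C) * (∏ j, wnorm (pj j) (fun i => |x i j|)) *
            wnormDual r (fun i => aD (y i)))) ∧
    (∀ C' : ℝ, 0 < C' →
      (∀ (n : ℕ) (x : Fin n → ∀ j, E j) (y : Fin n → (F →L[ℝ] ℝ)),
        (∑ i, |y i (T (x i))| ^ p) ^ (1 / p) ≤
          C' * (∏ j, wnorm (pj j) (fun i => |x i j|)) * wnormDual r (fun i => aD (y i))) →
      (∀ (n : ℕ) (x : Fin n → ∀ j, E j) (y : Fin n → (F →L[ℝ] ℝ)),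
        (∀ i j, 0 ≤ x i j) → (∀ i, ∀ z, 0 ≤ z → 0 ≤ y i z) →
        (∑ i, |y i (T (x i))| ^ p) ^ (1 / p) ≤
          C' * (∏ j, wnorm (pj j) (fun i => x i j)) * wnormDual r y)) := by
  classical
  have haD_pos : ∀ (φ : F →L[ℝ] ℝ) (z : F), 0 ≤ z → 0 ≤ aD φ z := by
    intro φ z hz
    obtain ⟨h1, h2⟩ := (haD φ).1 z hz
    linarith
  have habs_apply : ∀ (χ : F →L[ℝ] ℝ), (∀ w : F, 0 ≤ w → 0 ≤ χ w) →
      ∀ z : F, |χ z| ≤ χ |z| := by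
    intro χ hχ z
    have h1 : χ z = χ (z⁺) - χ (z⁻) := by
      conv_lhs => rw [← posPart_sub_negPart z]
      rw [map_sub]
    have h2 : χ |z| = χ (z⁺) + χ (z⁻) := by
      rw [← posPart_add_negPart z, map_add]
    have h3 : 0 ≤ χ (z⁺) := hχ _ (posPart_nonneg z)
    have h4 : 0 ≤ χ (z⁻) := hχ _ (negPart_nonneg z)
    rw [h1, h2, abs_le]
    constructor <;> linarith
  constructor
  · -- hard direction
    intro C hC hpos n x y
    set xp : Finset (Fin m) → Fin n → ∀ j, E j :=
      fun s i j => if j ∈ s then (x i j)⁺ else (x i j)⁻ with hxp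
    set yb : Bool → Fin n → (F →L[ℝ] ℝ) :=
      fun δ i => (2⁻¹ : ℝ) • (aD (y i) + (if δ then (1:ℝ) else -1) • y i) with hyb
    have hxp_nonneg : ∀ s i j, 0 ≤ xp s i j := by
      intro s i j
      rw [hxp]; dsimp only; split
      · exact posPart_nonneg _
      · exact negPart_nonneg _
    have hxp_le : ∀ s i j, xp s i j ≤ |x i j| := by
      intro s i j
      rw [hxp]; dsimp only
      rw [← posPart_add_negPart (x i j)]
      split
      · exact le_add_of_nonneg_right (negPart_nonneg _)
      · exact le_add_of_nonneg_left (posPart_nonneg _)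
    have hyb_apply : ∀ δ i z,
        yb δ i z = 2⁻¹ * (aD (y i) z + (if δ then (1:ℝ) else -1) * y i z) := by
      intro δ i z
      rw [hyb]
      dsimp only
      rw [ContinuousLinearMap.smul_apply, ContinuousLinearMap.add_apply,
        ContinuousLinearMap.smul_apply, smul_eq_mul, smul_eq_mul]
    have hyb_nonneg : ∀ δ i z, 0 ≤ z → 0 ≤ yb δ i z := by
      intro δ i z hz
      obtain ⟨h1, h2⟩ := (haD (y i)).1 z hz
      rw [hyb_apply]
      cases δ
      · simp only [Bool.false_eq_true, if_false]; nlinarith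
      · simp only [if_true]; nlinarith
    have hyb_le : ∀ δ i z, 0 ≤ z → yb δ i z ≤ aD (y i) z := by
      intro δ i z hz
      obtain ⟨h1, h2⟩ := (haD (y i)).1 z hz
      rw [hyb_apply]
      cases δ
      · simp only [Bool.false_eq_true, if_false]; nlinarith
      · simp only [if_true]; nlinarith
    have hydec : ∀ i (w : F), y i w = yb true i w - yb false i w := by
      intro i w
      rw [hyb_apply, hyb_apply]
      simp only [if_true, Bool.false_eq_true, if_false]
      ring
    have hexp : ∀ (χ : F →L[ℝ] ℝ) i,
        |χ (T (x i))| ≤ ∑ s : Finset (Fin m), |χ (T (xp s i))| := by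
      intro χ i
      have hxdec : x i = (fun j => (x i j)⁺) + (fun j => -((x i j)⁻)) := by
        funext j
        simp only [Pi.add_apply]
        rw [← sub_eq_add_neg, posPart_sub_negPart]
      have hTx : T (x i) = ∑ s : Finset (Fin m),
          T (s.piecewise (fun j => (x i j)⁺) (fun j => -((x i j)⁻))) := by
        conv_lhs => rw [hxdec]
        exact T.toMultilinearMap.map_add_univ _ _
      have hterm : ∀ s : Finset (Fin m),
          |χ (T (s.piecewise (fun j => (x i j)⁺) (fun j => -((x i j)⁻))))| =
            |χ (T (xp s i))| := by
        intro s
        have hpw : s.piecewise (fun j => (x i j)⁺) (fun j => -((x i j)⁻)) =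
            fun j => (if j ∈ s then (1:ℝ) else -1) • xp s i j := by
          funext j
          by_cases hj : j ∈ s
          · rw [Finset.piecewise_eq_of_mem _ _ _ hj]
            rw [hxp]; simp [hj]
          · rw [Finset.piecewise_eq_of_notMem _ _ _ hj]
            rw [hxp]; simp [hj]
        rw [hpw,
          show (T fun j => (if j ∈ s then (1:ℝ) else -1) • xp s i j) =
            (∏ j, if j ∈ s then (1:ℝ) else -1) • T (xp s i) from
            T.toMultilinearMap.map_smul_univ _ _,
          map_smul, smul_eq_mul, abs_mul,
          show |∏ j, if j ∈ s then (1:ℝ) else -1| = 1 by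
            rw [Finset.abs_prod, Finset.prod_eq_one]
            intro j _
            split <;> simp,
          one_mul]
      rw [hTx, map_sum]
      exact le_trans (Finset.abs_sum_le_sum_abs _ _)
        (le_of_eq (Finset.sum_congr rfl fun s _ => hterm s))
    set g : Finset (Fin m) × Bool → Fin n → ℝ :=
      fun k i => |yb k.2 i (T (xp k.1 i))| with hg
    have hpt : ∀ i, |y i (T (x i))| ≤ ∑ k : Finset (Fin m) × Bool, g k i := by
      intro i
      have h1 : |y i (T (x i))| ≤ |yb true i (T (x i))| + |yb false i (T (x i))| := by
        rw [show y i (T (x i)) = yb true i (T (x i)) - yb false i (T (x i)) from hydec i _,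
          sub_eq_add_neg]
        exact le_trans (abs_add_le _ _) (by rw [abs_neg])
      have h2 : ∀ δ, |yb δ i (T (x i))| ≤ ∑ s : Finset (Fin m), g (s, δ) i := by
        intro δ
        simpa [hg] using hexp (yb δ i) i
      have hsum : ∑ k : Finset (Fin m) × Bool, g k i =
          (∑ s : Finset (Fin m), g (s, true) i) + ∑ s : Finset (Fin m), g (s, false) i := by
        rw [Fintype.sum_prod_type, ← Finset.sum_add_distrib]
        exact Finset.sum_congr rfl fun s _ => by rw [Fintype.sum_bool]
      rw [hsum]
      exact le_trans h1 (add_le_add (h2 true) (h2 false))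
    have main1 : (∑ i, |y i (T (x i))| ^ p) ^ (1 / p) ≤
        ∑ k : Finset (Fin m) × Bool, (∑ i, |g k i| ^ p) ^ (1 / p) := by
      have step1 : (∑ i, |y i (T (x i))| ^ p) ^ (1 / p) ≤
          (∑ i, |∑ k : Finset (Fin m) × Bool, g k i| ^ p) ^ (1 / p) := by
        apply lp_mono hp
        intro i
        exact le_trans (hpt i) (le_abs_self _)
      exact le_trans step1 (lp_sum_le hp Finset.univ g)
    set P : ℝ := ∏ j, wnorm (pj j) (fun i => |x i j|) with hP
    set W : ℝ := wnormDual r (fun i => aD (y i)) with hW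
    have hP0 : 0 ≤ P := Finset.prod_nonneg fun j _ => wnorm_nonneg (hpj j) _
    have hW0 : 0 ≤ W := by
      rw [hW, wnormDual_eq_wnorm]
      exact wnorm_nonneg hr _
    have hk : ∀ k : Finset (Fin m) × Bool,
        (∑ i, |g k i| ^ p) ^ (1 / p) ≤ C * P * W := by
      rintro ⟨s, δ⟩
      have happ := hpos n (xp s) (yb δ) (fun i j => hxp_nonneg s i j)
        (fun i z hz => hyb_nonneg δ i z hz)
      have hwj : ∀ j, wnorm (pj j) (fun i => xp s i j) ≤ wnorm (pj j) (fun i => |x i j|) := by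
        intro j
        have hkey : ∀ c : Fin n → ℝ, ‖∑ i, c i • xp s i j‖ ≤
            ‖∑ i, |c i| • (fun i' => |x i' j|) i‖ := by
          intro c
          apply HasSolidNorm.solid
          have hr2 : |∑ i, |c i| • (fun i' => |x i' j|) i| =
              ∑ i, |c i| • (fun i' => |x i' j|) i :=
            aux_abs_of_nonneg (Finset.sum_nonneg fun i _ =>
              aux_smul_nonneg (abs_nonneg _) (aux_abs_nonneg' _))
          rw [hr2]
          calc |∑ i, c i • xp s i j| ≤ ∑ i, |c i • xp s i j| := aux_abs_sum_le _ _
            _ ≤ ∑ i, |c i| • (fun i' => |x i' j|) i := Finset.sum_le_sum fun i _ => by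
                rw [aux_abs_smul _ (hxp_nonneg s i j)]
                exact aux_smul_mono (abs_nonneg _) (hxp_le s i j)
        exact wnorm_mono_of (hpj j) _ _ hkey
      have hwd : wnormDual r (yb δ) ≤ W := by
        rw [hW, wnormDual_eq_wnorm, wnormDual_eq_wnorm]
        apply wnorm_mono_of hr
        intro c
        apply ContinuousLinearMap.opNorm_le_bound _ (norm_nonneg _)
        intro z
        have e1 : (∑ i, c i • yb δ i) z = ∑ i, c i * yb δ i z := by
          rw [ContinuousLinearMap.sum_apply]
          exact Finset.sum_congr rfl fun i _ => by
            rw [ContinuousLinearMap.smul_apply, smul_eq_mul]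
        have e4 : ∀ i, |c i * yb δ i z| ≤ |c i| * aD (y i) |z| := by
          intro i
          rw [abs_mul]
          refine mul_le_mul_of_nonneg_left ?_ (abs_nonneg _)
          exact le_trans (habs_apply (yb δ i) (hyb_nonneg δ i) z)
            (hyb_le δ i |z| (aux_abs_nonneg' z))
        calc ‖(∑ i, c i • yb δ i) z‖ = |∑ i, c i * yb δ i z| := by
              rw [e1, Real.norm_eq_abs]
          _ ≤ ∑ i, |c i * yb δ i z| := Finset.abs_sum_le_sum_abs _ _
          _ ≤ ∑ i, |c i| * aD (y i) |z| := Finset.sum_le_sum fun i _ => e4 i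
          _ = (∑ i, |c i| • aD (y i)) |z| := by
              rw [ContinuousLinearMap.sum_apply]
              exact (Finset.sum_congr rfl fun i _ => by
                rw [ContinuousLinearMap.smul_apply, smul_eq_mul]).symm
          _ ≤ ‖(∑ i, |c i| • aD (y i)) |z|‖ := le_abs_self _
          _ ≤ ‖∑ i, |c i| • aD (y i)‖ * ‖|z|‖ := (∑ i, |c i| • aD (y i)).le_opNorm _
          _ = ‖∑ i, |c i| • aD (y i)‖ * ‖z‖ := by rw [norm_abs_eq_norm]
      have hprod : ∏ j, wnorm (pj j) (fun i => xp s i j) ≤ P :=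
        Finset.prod_le_prod (fun j _ => wnorm_nonneg (hpj j) _) (fun j _ => hwj j)
      have hWδ0 : 0 ≤ wnormDual r (yb δ) := by
        rw [wnormDual_eq_wnorm]
        exact wnorm_nonneg hr _
      have hgk : (∑ i, |g (s, δ) i| ^ p) = ∑ i, |yb δ i (T (xp s i))| ^ p :=
        Finset.sum_congr rfl fun i _ => by rw [hg]; rw [abs_abs]
      calc (∑ i, |g (s, δ) i| ^ p) ^ (1 / p)
          = (∑ i, |yb δ i (T (xp s i))| ^ p) ^ (1 / p) := by rw [hgk]
        _ ≤ C * (∏ j, wnorm (pj j) (fun i => xp s i j)) * wnormDual r (yb δ) := happ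
        _ ≤ C * P * wnormDual r (yb δ) :=
            mul_le_mul_of_nonneg_right (mul_le_mul_of_nonneg_left hprod hC.le) hWδ0
        _ ≤ C * P * W := mul_le_mul_of_nonneg_left hwd (mul_nonneg hC.le hP0)
    calc (∑ i, |y i (T (x i))| ^ p) ^ (1 / p)
        ≤ ∑ k : Finset (Fin m) × Bool, (∑ i, |g k i| ^ p) ^ (1 / p) := main1
      _ ≤ ∑ _k : Finset (Fin m) × Bool, C * P * W := Finset.sum_le_sum fun k _ => hk k
      _ = (Fintype.card (Finset (Fin m) × Bool) : ℝ) * (C * P * W) := by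
          rw [Finset.sum_const, nsmul_eq_mul, Finset.card_univ]
      _ = (2 ^ (m + 1) * C) * P * W := by
          have hcard : Fintype.card (Finset (Fin m) × Bool) = 2 ^ (m + 1) := by
            rw [Fintype.card_prod, Fintype.card_finset, Fintype.card_bool, Fintype.card_fin,
              pow_succ]
          rw [hcard]
          push_cast
          ring
  · -- easy direction
    intro C' hC' habs n x y hx hy
    have hxeq : ∀ j, (fun i => |x i j|) = fun i => x i j := by
      intro j
      funext i
      exact aux_abs_of_nonneg (hx i j)
    have hyeq : (fun i => aD (y i)) = y := by
      funext i
      ext z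
      have hpos' : ∀ w : F, 0 ≤ w → aD (y i) w = y i w := by
        intro w hw
        have h3 := ((haD (y i)).1 w hw).1
        have h4 := (haD (y i)).2 (y i)
          (fun w' hw' => ⟨le_rfl, by linarith [hy i w' hw']⟩) w hw
        linarith
      conv_lhs => rw [← posPart_sub_negPart z]
      conv_rhs => rw [← posPart_sub_negPart z]
      rw [map_sub, map_sub, hpos' _ (posPart_nonneg z), hpos' _ (negPart_nonneg z)]
    have := habs n x y
    rw [hyeq] at this
    have hprodeq : (∏ j, wnorm (pj j) (fun i => |x i j|)) =
        ∏ j, wnorm (pj j) (fun i => x i j) :=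
      Finset.prod_congr rfl fun j _ => by rw [hxeq j]
    rwa [hprodeq] at this
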